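/- Let A be a commutative semiring whose addition is idempotent (a ⊕ a = a for all a) and which satisfies the cancellation condition: for all a, b, c ∈ A with a ≠ 𝟘, a ⊙ b = a ⊙ c implies b = c. Then Newton's binomial formula holds in the degenerate form (a ⊕ b)ⁿ = aⁿ ⊕ bⁿ for all a, b ∈ A and all natural numbers n ≥ 1. -/

import Mathlib

/-- In a commutative semiring with idempotent addition satisfying the
cancellation condition, Newton's binomial formula holds in the degenerate form
`(a + b)^n = a^n + b^n` for all `n ≥ 1`. -/
theorem idempotent_binomial_cancellation {A : Type*} [CommSemiring A]
    (hidem : ∀ a : A, a + a = a)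
    (hcancel : ∀ a b c : A, a ≠ 0 → a * b = a * c → b = c) :
    ∀ (a b : A) (n : ℕ) , 1 ≤ n → (a + b) ^ n = a ^ n + b ^ n := by
  -- if a sum is zero, both summands are zero
  have hzero : ∀ a b : A, a + b = 0 → a = 0 ∧ b = 0 := by
    intro a b h
    constructor
    · have h1 : a + (a + b) = a + b := by rw [← add_assoc, hidem]
      rwa [h, add_zero] at h1
    · have h1 : (a + b) + b = a + b := by rw [add_assoc, hidem]
      rwa [h, zero_add] at h1
  have h3 : ∀ x : A, x + (x + x) = x := fun x => by rw [hidem, hidem]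
  -- antisymmetry of the canonical order
  have antisymm : ∀ u v : A, u + v = v → v + u = u → u = v := by
    intro u v hu hv
    calc u = v + u := hv.symm
      _ = u + v := add_comm _ _
      _ = v := hu
  -- the order is multiplicative
  have mul_le : ∀ u v u' v' : A, u + v = v → u' + v' = v' →
      u * u' + v * v' = v * v' := by
    intro u v u' v' hu hv'
    calc u * u' + v * v' = u * u' + (u + v) * (u' + v') := by rw [hu, hv']
      _ = (u * u' + u * u') + (u * v' + (v * u' + v * v')) := by ring
      _ = u * u' + (u * v' + (v * u' + v * v')) := by rw [hidem]
      _ = (u + v) * (u' + v') := by ring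
      _ = v * v' := by rw [hu, hv']
  -- powers preserve the order
  have pow_le : ∀ (u v : A), u + v = v → ∀ n : ℕ, u ^ n + v ^ n = v ^ n := by
    intro u v hu n
    induction n with
    | zero => simpa using hidem 1
    | succ n ih =>
      rw [pow_succ, pow_succ]
      exact mul_le _ _ _ _ ih hu
  -- a ≤ a + b
  have le_add : ∀ a b : A, a + (a + b) = a + b := by
    intro a b; rw [← add_assoc, hidem]
  -- the base squaring identity
  have G2 : ∀ a b : A, (a + b) ^ 2 = a ^ 2 + b ^ 2 := by
    intro a b
    by_cases hab : a + b = 0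
    · obtain ⟨ha, hb⟩ := hzero a b hab
      simp [ha, hb, hidem]
    · apply hcancel (a + b) _ _ hab
      have e1 : (a + b) * (a + b) ^ 2
          = a ^ 3 + (a ^ 2 * b + (a ^ 2 * b + a ^ 2 * b))
            + (a * b ^ 2 + (a * b ^ 2 + a * b ^ 2)) + b ^ 3 := by ring
      rw [e1, h3 (a ^ 2 * b), h3 (a * b ^ 2)]
      ring
  -- G holds for powers of two
  have Gpow2 : ∀ k : ℕ, ∀ a b : A, (a + b) ^ (2 ^ k) = a ^ (2 ^ k) + b ^ (2 ^ k) := by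
    intro k
    induction k with
    | zero => intro a b; simp
    | succ k ih =>
      intro a b
      have h2 : (2 : ℕ) ^ (k + 1) = 2 ^ k * 2 := by rw [pow_succ]
      rw [h2, pow_mul, pow_mul, pow_mul, ih, G2]
  -- descent: G (n+1) implies G n
  have Gdown : ∀ n : ℕ, 1 ≤ n →
      (∀ a b : A, (a + b) ^ (n + 1) = a ^ (n + 1) + b ^ (n + 1)) →
      ∀ a b : A, (a + b) ^ n = a ^ n + b ^ n := by
    intro n hn H a b
    by_cases hab : a + b = 0
    · obtain ⟨ha, hb⟩ := hzero a b hab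
      simp [ha, hb, zero_pow (Nat.one_le_iff_ne_zero.mp hn)]
    · symm
      apply hcancel (a + b) _ _ hab
      -- set u = (a+b)*(a^n+b^n), v = a^(n+1)+b^(n+1)
      have hv_le_u : (a ^ (n + 1) + b ^ (n + 1)) + (a + b) * (a ^ n + b ^ n)
          = (a + b) * (a ^ n + b ^ n) := by
        have e : (a + b) * (a ^ n + b ^ n)
            = (a ^ (n + 1) + b ^ (n + 1)) + (a * b ^ n + a ^ n * b) := by
          rw [pow_succ, pow_succ]; ring
        rw [e, ← add_assoc, hidem]
      have ht : (a ^ n + b ^ n) + (a + b) ^ n = (a + b) ^ n := by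
        have h1 := pow_le a (a + b) (le_add a b) n
        have h2 := pow_le b (a + b) (by rw [add_comm a b, ← add_assoc, hidem]) n
        calc (a ^ n + b ^ n) + (a + b) ^ n = a ^ n + (b ^ n + (a + b) ^ n) := by
              rw [add_assoc]
          _ = a ^ n + (a + b) ^ n := by rw [h2]
          _ = (a + b) ^ n := h1
      have hu_le_v : (a + b) * (a ^ n + b ^ n) + (a ^ (n + 1) + b ^ (n + 1))
          = a ^ (n + 1) + b ^ (n + 1) := by
        have := mul_le (a ^ n + b ^ n) ((a + b) ^ n) (a + b) (a + b) ht (hidem (a + b))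
        calc (a + b) * (a ^ n + b ^ n) + (a ^ (n + 1) + b ^ (n + 1))
            = (a ^ n + b ^ n) * (a + b) + (a + b) ^ n * (a + b) := by
              rw [← pow_succ, H a b]; ring
          _ = (a + b) ^ n * (a + b) := this
          _ = a ^ (n + 1) + b ^ (n + 1) := by rw [← pow_succ, H a b]
      have hu_eq_v : (a + b) * (a ^ n + b ^ n) = a ^ (n + 1) + b ^ (n + 1) :=
        antisymm _ _ hu_le_v hv_le_u
      rw [hu_eq_v, ← pow_succ', H a b]
  -- iterate the descent
  have down : ∀ j n : ℕ, 1 ≤ n →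
      (∀ a b : A, (a + b) ^ (n + j) = a ^ (n + j) + b ^ (n + j)) →
      ∀ a b : A, (a + b) ^ n = a ^ n + b ^ n := by
    intro j
    induction j with
    | zero => intro n _ H; simpa using H
    | succ j ih =>
      intro n hn H
      apply ih n hn
      have hnj : 1 ≤ n + j := le_trans hn (Nat.le_add_right n j)
      apply Gdown (n + j) hnj
      intro a b
      have e : n + j + 1 = n + (j + 1) := by omega
      rw [e]; exact H a b
  intro a b n hn
  refine down (2 ^ n - n) n hn ?_ a b
  have hle : n ≤ 2 ^ n := Nat.le_of_lt (Nat.lt_two_pow_self (n := n))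
  have e : n + (2 ^ n - n) = 2 ^ n := by omega
  intro a b
  rw [e]
  exact Gpow2 n a b
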